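/- The ideal of polynomials P ∈ k[X1,X2,X3,X4] such that P(x, 2xt−v^2, 3x^3u−3xvt+v^3, 8xt^3+9x^4u^2−18x^2tuv−3t^2v^2+6xuv^3) lies in the ideal (x) of k[x,v,t,u] equals the ideal (X1, X2^3 + X3^2) of k[X1,X2,X3,X4]. Equivalently, {P : P(0, −v^2, v^3, −3t^2 v^2) = 0 in k[v,t]} = (X1, X2^3 + X3^2). -/

import Mathlib

open MvPolynomial

private lemma vanish_of_eval (L : Type*) [Field L] [CharZero L]
    (A : MvPolynomial (Fin 2) L)
    (h : ∀ y : Fin 2 → L, y 0 ≠ 0 → eval y A = 0) : A = 0 := by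
  have : X 0 * A = 0 := by
    apply MvPolynomial.funext
    intro y
    rw [map_zero, map_mul, eval_X]
    rcases eq_or_ne (y 0) 0 with hy | hy
    · rw [hy, zero_mul]
    · rw [h y hy, mul_zero]
  rcases mul_eq_zero.mp this with h0 | h0
  · exact absurd h0 (MvPolynomial.X_ne_zero 0)
  · exact h0

private lemma core_inj (K : Type*) [Field K] [CharZero K]
    (A B : MvPolynomial (Fin 2) K)
    (h : aeval ![-X 1 ^ 2, -3 * X 2 ^ 2 * X 1 ^ 2] A
        + X 1 ^ 3 * aeval ![-X 1 ^ 2, -3 * X 2 ^ 2 * X 1 ^ 2] B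
        = (0 : MvPolynomial (Fin 4) K)) :
    A = 0 ∧ B = 0 := by
  classical
  set L := AlgebraicClosure K
  haveI : CharZero L := charZero_of_injective_algebraMap (algebraMap K L).injective
  -- evaluation consequence
  have key : ∀ x1 x2 : L,
      aeval ![-x1 ^ 2, -3 * x2 ^ 2 * x1 ^ 2] A
        + x1 ^ 3 * aeval ![-x1 ^ 2, -3 * x2 ^ 2 * x1 ^ 2] B = 0 := by
    intro x1 x2
    have := congrArg (aeval ![(0 : L), x1, x2, 0]) h
    rw [map_add, map_mul, map_pow, map_zero] at this
    rw [comp_aeval_apply, comp_aeval_apply] at this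
    have hv : (fun i => aeval ![(0 : L), x1, x2, 0]
        ((![-X 1 ^ 2, -3 * X 2 ^ 2 * X 1 ^ 2] : Fin 2 → MvPolynomial (Fin 4) K) i))
        = ![-x1 ^ 2, -3 * x2 ^ 2 * x1 ^ 2] := by
      funext i
      fin_cases i <;> simp <;> ring
    rw [hv] at this
    simpa [neg_mul] using this
  -- split using x1 ↦ -x1
  have key2 : ∀ x1 x2 : L,
      aeval ![-x1 ^ 2, -3 * x2 ^ 2 * x1 ^ 2] A = 0 ∧
      x1 ^ 3 * aeval ![-x1 ^ 2, -3 * x2 ^ 2 * x1 ^ 2] B = 0 := by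
    intro x1 x2
    have h1 := key x1 x2
    have h2 := key (-x1) x2
    rw [show (-x1) ^ 2 = x1 ^ 2 by ring, show (-x1) ^ 3 = -x1 ^ 3 by ring] at h2
    exact ⟨by linear_combination (h1 + h2) / 2, by linear_combination (h1 - h2) / 2⟩
  -- surjectivity onto points with first coordinate nonzero
  have surj : ∀ y : Fin 2 → L, y 0 ≠ 0 →
      ∃ x1 x2 : L, x1 ≠ 0 ∧ (![-x1 ^ 2, -3 * x2 ^ 2 * x1 ^ 2] : Fin 2 → L) = y := by
    intro y hy
    obtain ⟨x1, hx1⟩ := IsAlgClosed.exists_pow_nat_eq (-(y 0)) (n := 2) (by norm_num)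
    obtain ⟨x2, hx2⟩ := IsAlgClosed.exists_pow_nat_eq (y 1 / (3 * y 0)) (n := 2) (by norm_num)
    refine ⟨x1, x2, ?_, ?_⟩
    · intro h0
      rw [h0] at hx1
      simp at hx1
      exact hy hx1
    · funext i
      fin_cases i
      · simp [hx1]; exact neg_neg (y 0)
      · show -3 * x2 ^ 2 * x1 ^ 2 = y 1
        rw [hx1, hx2]
        have h3 : (3:L) * y 0 ≠ 0 := mul_ne_zero (by norm_num) hy
        linear_combination (div_mul_cancel₀ (y 1) h3)
  -- conclude A, B map to zero over L
  have hAL : ∀ y : Fin 2 → L, y 0 ≠ 0 → aeval y A = 0 := by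
    intro y hy
    obtain ⟨x1, x2, hx1, hv⟩ := surj y hy
    rw [← hv]
    exact (key2 x1 x2).1
  have hBL : ∀ y : Fin 2 → L, y 0 ≠ 0 → aeval y B = 0 := by
    intro y hy
    obtain ⟨x1, x2, hx1, hv⟩ := surj y hy
    rw [← hv]
    have := (key2 x1 x2).2
    have hx13 : x1 ^ 3 ≠ 0 := pow_ne_zero _ hx1
    exact (mul_eq_zero.mp this).resolve_left hx13
  -- descend to K
  have hmap : Function.Injective (MvPolynomial.map (algebraMap K L) :
      MvPolynomial (Fin 2) K → MvPolynomial (Fin 2) L) :=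
    MvPolynomial.map_injective _ (algebraMap K L).injective
  constructor
  · apply hmap
    rw [map_zero]
    apply vanish_of_eval
    intro y hy
    rw [MvPolynomial.eval_map, ← aeval_def]
    exact hAL y hy
  · apply hmap
    rw [map_zero]
    apply vanish_of_eval
    intro y hy
    rw [MvPolynomial.eval_map, ← aeval_def]
    exact hBL y hy

open MvPolynomial

private lemma decomp (K : Type*) [Field K] [CharZero K] (P : MvPolynomial (Fin 4) K) :
    ∃ A B : MvPolynomial (Fin 2) K,
      P - (aeval ![X 1, X 3] A + X 2 * aeval ![X 1, X 3] B) ∈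
        Ideal.span ({X 0, X 1 ^ 3 + X 2 ^ 2} : Set (MvPolynomial (Fin 4) K)) := by
  have hX0 : (X 0 : MvPolynomial (Fin 4) K) ∈
      Ideal.span ({X 0, X 1 ^ 3 + X 2 ^ 2} : Set (MvPolynomial (Fin 4) K)) :=
    Ideal.subset_span (Set.mem_insert _ _)
  have hG : (X 1 ^ 3 + X 2 ^ 2 : MvPolynomial (Fin 4) K) ∈
      Ideal.span ({X 0, X 1 ^ 3 + X 2 ^ 2} : Set (MvPolynomial (Fin 4) K)) :=
    Ideal.subset_span (Set.mem_insert_of_mem _ rfl)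
  induction P using MvPolynomial.induction_on with
  | C a =>
    refine ⟨C a, 0, ?_⟩
    have : (C a : MvPolynomial (Fin 4) K) - (aeval ![X 1, X 3] (C a)
        + X 2 * aeval ![X 1, X 3] (0 : MvPolynomial (Fin 2) K)) = 0 := by
      simp [algHom_C]
    rw [this]; exact Ideal.zero_mem _
  | add p q hp hq =>
    obtain ⟨A1, B1, h1⟩ := hp
    obtain ⟨A2, B2, h2⟩ := hq
    refine ⟨A1 + A2, B1 + B2, ?_⟩
    have := Ideal.add_mem _ h1 h2
    convert this using 1
    simp only [map_add]
    ring
  | mul_X p n hp =>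
    obtain ⟨A, B, hAB⟩ := hp
    fin_cases n
    · refine ⟨0, 0, ?_⟩
      simp only [map_zero, mul_zero, add_zero, sub_zero]
      exact Ideal.mul_mem_left _ p hX0
    · refine ⟨A * X 0, B * X 0, ?_⟩
      have := Ideal.mul_mem_right (X 1) _ hAB
      convert this using 1
      simp only [map_mul, aeval_X, Matrix.cons_val_zero]
      ring_nf
      rfl
    · refine ⟨-(X 0) ^ 3 * B, A, ?_⟩
      have := Ideal.add_mem _ (Ideal.mul_mem_right (X 2) _ hAB)
        (Ideal.mul_mem_left _ (aeval ![X 1, X 3] B) hG)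
      convert this using 1
      simp only [map_mul, map_neg, map_pow, aeval_X, Matrix.cons_val_zero]
      ring_nf
      rfl
    · refine ⟨A * X 1, B * X 1, ?_⟩
      have := Ideal.mul_mem_right (X 3) _ hAB
      convert this using 1
      simp only [map_mul, aeval_X, Matrix.cons_val_one, Matrix.head_cons, Matrix.cons_val_zero]
      ring_nf
      rfl

open MvPolynomial

private lemma main_iff (K : Type*) [Field K] [CharZero K] (P : MvPolynomial (Fin 4) K) :
    aeval ![(0 : MvPolynomial (Fin 4) K), -X 1 ^ 2, X 1 ^ 3,
        -3 * X 2 ^ 2 * X 1 ^ 2] P = 0 ↔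
      P ∈ Ideal.span ({X 0, X 1 ^ 3 + X 2 ^ 2} : Set (MvPolynomial (Fin 4) K)) := by
  set φ : MvPolynomial (Fin 4) K →ₐ[K] MvPolynomial (Fin 4) K :=
    aeval ![(0 : MvPolynomial (Fin 4) K), -X 1 ^ 2, X 1 ^ 3, -3 * X 2 ^ 2 * X 1 ^ 2] with hφ
  have hker : Ideal.span ({X 0, X 1 ^ 3 + X 2 ^ 2} : Set (MvPolynomial (Fin 4) K)) ≤
      RingHom.ker φ.toRingHom := by
    rw [Ideal.span_le]
    rintro q (rfl | rfl) <;> rw [SetLike.mem_coe, RingHom.mem_ker]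
    · simp [hφ]
    · simp only [hφ, AlgHom.toRingHom_eq_coe, RingHom.coe_coe, map_add, map_pow, aeval_X]
      norm_num [Matrix.cons_val_one, Matrix.head_cons, Matrix.cons_val_two, Matrix.tail_cons]
      ring
  constructor
  · intro h
    obtain ⟨A, B, hAB⟩ := decomp K P
    have h2 : φ (P - (aeval ![X 1, X 3] A + X 2 * aeval ![X 1, X 3] B)) = 0 :=
      hker hAB
    rw [map_sub, h, zero_sub, neg_eq_zero, map_add, map_mul] at h2
    rw [comp_aeval_apply, comp_aeval_apply] at h2
    have hv : (fun i => φ ((![X 1, X 3] : Fin 2 → MvPolynomial (Fin 4) K) i))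
        = ![-X 1 ^ 2, -3 * X 2 ^ 2 * X 1 ^ 2] := by
      funext i; fin_cases i <;> simp [hφ]
    have hx2 : φ (X 2) = X 1 ^ 3 := by simp [hφ]
    rw [hv, hx2] at h2
    obtain ⟨hA0, hB0⟩ := core_inj K A B h2
    rw [hA0, hB0] at hAB
    simpa using hAB
  · intro h
    exact hker h

private lemma part1_reduce (K : Type*) [Field K] [CharZero K]
    (h₁ h₂ h₃ h₄ : MvPolynomial (Fin 4) K)
    (hh₁ : h₁ = X 0)
    (hh₂ : h₂ = 2 * X 0 * X 2 - X 1 ^ 2)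
    (hh₃ : h₃ = 3 * X 0 ^ 3 * X 3 - 3 * X 0 * X 1 * X 2 + X 1 ^ 3)
    (hh₄ : h₄ = 8 * X 0 * X 2 ^ 3 + 9 * X 0 ^ 4 * X 3 ^ 2
        - 18 * X 0 ^ 2 * X 2 * X 3 * X 1 - 3 * X 2 ^ 2 * X 1 ^ 2
        + 6 * X 0 * X 3 * X 1 ^ 3)
    (P : MvPolynomial (Fin 4) K) :
    (aeval ![h₁, h₂, h₃, h₄] P ∈
        Ideal.span ({X 0} : Set (MvPolynomial (Fin 4) K))) ↔
      aeval ![(0 : MvPolynomial (Fin 4) K), -X 1 ^ 2, X 1 ^ 3,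
        -3 * X 2 ^ 2 * X 1 ^ 2] P = 0 := by
  set J : Ideal (MvPolynomial (Fin 4) K) := Ideal.span {X 0} with hJ
  set φ : MvPolynomial (Fin 4) K →ₐ[K] MvPolynomial (Fin 4) K :=
    aeval ![(0 : MvPolynomial (Fin 4) K), -X 1 ^ 2, X 1 ^ 3, -3 * X 2 ^ 2 * X 1 ^ 2] with hφ
  -- step 1: aeval h P ≡ φ P  mod J
  have hdiff : aeval ![h₁, h₂, h₃, h₄] P - φ P ∈ J := by
    have hcomp : (Ideal.Quotient.mkₐ K J).comp (aeval ![h₁, h₂, h₃, h₄])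
        = (Ideal.Quotient.mkₐ K J).comp φ := by
      apply MvPolynomial.algHom_ext
      intro i
      simp only [AlgHom.comp_apply, aeval_X, Ideal.Quotient.mkₐ_eq_mk]
      rw [Ideal.Quotient.eq, hJ, Ideal.mem_span_singleton]
      fin_cases i
      · refine ⟨1, ?_⟩
        simp only [hh₁, hφ, aeval_X]
        norm_num [Matrix.cons_val_zero, Matrix.cons_val_one, Matrix.head_cons]
      · refine ⟨2 * X 2, ?_⟩
        simp only [hh₂, hφ, aeval_X]
        norm_num [Matrix.cons_val_zero, Matrix.cons_val_one, Matrix.head_cons]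
        ring
      · refine ⟨3 * X 0 ^ 2 * X 3 - 3 * X 1 * X 2, ?_⟩
        simp only [hh₃, hφ, aeval_X]
        norm_num [Matrix.cons_val_zero, Matrix.cons_val_one, Matrix.head_cons]
        ring
      · refine ⟨8 * X 2 ^ 3 + 9 * X 0 ^ 3 * X 3 ^ 2 - 18 * X 0 * X 2 * X 3 * X 1
          + 6 * X 3 * X 1 ^ 3, ?_⟩
        simp only [hh₄, hφ, aeval_X]
        norm_num [Matrix.cons_val_zero, Matrix.cons_val_one, Matrix.head_cons]
        ring
    have := AlgHom.congr_fun hcomp P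
    simp only [AlgHom.comp_apply, Ideal.Quotient.mkₐ_eq_mk] at this
    rwa [Ideal.Quotient.eq] at this
  -- step 2: φ P ∈ J ↔ φ P = 0
  have hφJ : φ P ∈ J ↔ φ P = 0 := by
    constructor
    · intro h
      rw [hJ, Ideal.mem_span_singleton] at h
      obtain ⟨c, hc⟩ := h
      set e : MvPolynomial (Fin 4) K →ₐ[K] MvPolynomial (Fin 4) K :=
        aeval ![(0 : MvPolynomial (Fin 4) K), X 1, X 2, X 3] with he
      have hfix : e (φ P) = φ P := by
        rw [hφ, comp_aeval_apply]
        have hv : (fun i => e ((![(0 : MvPolynomial (Fin 4) K), -X 1 ^ 2, X 1 ^ 3,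
            -3 * X 2 ^ 2 * X 1 ^ 2] : Fin 4 → MvPolynomial (Fin 4) K) i))
            = ![(0 : MvPolynomial (Fin 4) K), -X 1 ^ 2, X 1 ^ 3, -3 * X 2 ^ 2 * X 1 ^ 2] := by
          funext i; fin_cases i <;> simp [he, map_ofNat]
        rw [hv]
      rw [← hfix, hc, map_mul]
      have : e (X 0) = 0 := by simp [he]
      rw [this, zero_mul]
    · intro h; rw [h]; exact Ideal.zero_mem _
  constructor
  · intro h
    exact hφJ.mp (by have := J.sub_mem h hdiff; simpa using this)
  · intro h
    have : φ P ∈ J := hφJ.mpr h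
    have := J.add_mem hdiff this
    simpa using this

theorem relations_ideal_mod_x
    (K : Type*) [Field K] [CharZero K]
    (h₁ h₂ h₃ h₄ : MvPolynomial (Fin 4) K)
    (hh₁ : h₁ = X 0)
    (hh₂ : h₂ = 2 * X 0 * X 2 - X 1 ^ 2)
    (hh₃ : h₃ = 3 * X 0 ^ 3 * X 3 - 3 * X 0 * X 1 * X 2 + X 1 ^ 3)
    (hh₄ : h₄ = 8 * X 0 * X 2 ^ 3 + 9 * X 0 ^ 4 * X 3 ^ 2
        - 18 * X 0 ^ 2 * X 2 * X 3 * X 1 - 3 * X 2 ^ 2 * X 1 ^ 2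
        + 6 * X 0 * X 3 * X 1 ^ 3) :
    ∀ P : MvPolynomial (Fin 4) K,
      (aeval ![h₁, h₂, h₃, h₄] P ∈
          Ideal.span ({X 0} : Set (MvPolynomial (Fin 4) K)) ↔
        P ∈ Ideal.span ({X 0, X 1 ^ 3 + X 2 ^ 2} : Set (MvPolynomial (Fin 4) K))) ∧
      (aeval ![(0 : MvPolynomial (Fin 4) K), -X 1 ^ 2, X 1 ^ 3,
            -3 * X 2 ^ 2 * X 1 ^ 2] P = 0 ↔
        P ∈ Ideal.span ({X 0, X 1 ^ 3 + X 2 ^ 2} : Set (MvPolynomial (Fin 4) K))) := by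
  intro P
  exact ⟨(part1_reduce K h₁ h₂ h₃ h₄ hh₁ hh₂ hh₃ hh₄ P).trans (main_iff K P), main_iff K P⟩
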